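/- For every n ∈ ℕ, the average over the torus (1/(2π)^d) ∫_{𝕋^d} Tr A_α^n(k) dk equals Σ_{c∈C_n^0} cos α(c), where C_n^0 is the set of all cycles of length n with zero index τ(c) = 0. -/

import Mathlib

open Finset MeasureTheory

lemma pow_entry {V E : Type*} [Fintype V] [DecidableEq V] [Fintype E] [DecidableEq E]
    (src tgt : E → V) (w : E → ℂ) :
    ∀ (n : ℕ) (x y : V),
      ((Matrix.of fun x y => ∑ e ∈ univ.filter fun e => src e = x ∧ tgt e = y, w e) ^ (n + 1)) x y
        = ∑ p ∈ univ.filter (fun p : Fin (n + 1) → E =>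
            src (p 0) = x ∧ tgt (p (Fin.last n)) = y ∧
            ∀ i : Fin n, tgt (p i.castSucc) = src (p i.succ)),
            ∏ i, w (p i) := by
  intro n
  induction n with
  | zero =>
    intro x y
    rw [pow_one]
    refine (Finset.sum_nbij' (fun p => p 0) (fun e => fun _ => e) ?_ ?_ ?_ ?_ ?_).symm
    · intro p hp
      simp only [mem_filter, mem_univ, true_and] at hp ⊢
      exact ⟨hp.1, hp.2.1⟩
    · intro e he
      simp only [mem_filter, mem_univ, true_and] at he ⊢
      exact ⟨he.1, he.2, fun i => i.elim0⟩
    · intro p hp; funext i; show p 0 = p i; rw [Fin.fin_one_eq_zero i]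
    · intro e he; rfl
    · intro p hp; simp
  | succ n ih =>
    intro x y
    rw [pow_succ, Matrix.mul_apply]
    simp only [ih, Matrix.of_apply]
    have step1 : ∀ z : V,
        (∑ p ∈ univ.filter (fun p : Fin (n + 1) → E =>
            src (p 0) = x ∧ tgt (p (Fin.last n)) = z ∧
            ∀ i : Fin n, tgt (p i.castSucc) = src (p i.succ)), ∏ i, w (p i)) *
          (∑ e ∈ univ.filter fun e => src e = z ∧ tgt e = y, w e)
        = ∑ pe ∈ (univ : Finset ((Fin (n+1) → E) × E)).filter
            (fun pe => (src (pe.1 0) = x ∧ tgt (pe.1 (Fin.last n)) = z ∧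
              ∀ i : Fin n, tgt (pe.1 i.castSucc) = src (pe.1 i.succ)) ∧
              (src pe.2 = z ∧ tgt pe.2 = y)),
            (∏ i, w (pe.1 i)) * w pe.2 := by
      intro z
      rw [Finset.sum_mul_sum, ← Finset.sum_product', ← Finset.filter_product,
        Finset.univ_product_univ]
    simp only [step1]
    rw [show (∑ z : V, ∑ pe ∈ (univ : Finset ((Fin (n+1) → E) × E)).filter
            (fun pe => (src (pe.1 0) = x ∧ tgt (pe.1 (Fin.last n)) = z ∧
              ∀ i : Fin n, tgt (pe.1 i.castSucc) = src (pe.1 i.succ)) ∧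
              (src pe.2 = z ∧ tgt pe.2 = y)),
            (∏ i, w (pe.1 i)) * w pe.2)
        = ∑ z : V, ∑ pe ∈ ((univ : Finset ((Fin (n+1) → E) × E)).filter
            (fun pe => src (pe.1 0) = x ∧
              (∀ i : Fin n, tgt (pe.1 i.castSucc) = src (pe.1 i.succ)) ∧
              src pe.2 = tgt (pe.1 (Fin.last n)) ∧ tgt pe.2 = y)).filter
            (fun pe => tgt (pe.1 (Fin.last n)) = z),
            (∏ i, w (pe.1 i)) * w pe.2 from by
      refine Finset.sum_congr rfl fun z _ => Finset.sum_congr ?_ fun _ _ => rfl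
      rw [Finset.filter_filter]
      apply Finset.filter_congr
      intro pe _
      constructor
      · rintro ⟨⟨h1, h2, h3⟩, h4, h5⟩; exact ⟨⟨h1, h3, by rw [h4, h2], h5⟩, h2⟩
      · rintro ⟨⟨h1, h3, h4, h5⟩, h2⟩; exact ⟨⟨h1, h2, h3⟩, by rw [h4, h2], h5⟩]
    rw [Finset.sum_fiberwise_of_maps_to (fun pe _ => Finset.mem_univ _)]
    -- now bijection with snoc
    refine Finset.sum_nbij' (fun pe => Fin.snoc pe.1 pe.2)
      (fun q => (Fin.init q, q (Fin.last (n+1)))) ?_ ?_ ?_ ?_ ?_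
    · intro pe hpe
      simp only [mem_filter, mem_univ, true_and] at hpe ⊢
      obtain ⟨h1, h3, h4, h5⟩ := hpe
      refine ⟨?_, ?_, ?_⟩
      · rw [show (0 : Fin (n+2)) = Fin.castSucc 0 by simp, Fin.snoc_castSucc]; exact h1
      · rw [Fin.snoc_last]; exact h5
      · intro i
        refine Fin.lastCases ?_ ?_ i
        · rw [Fin.succ_last, Fin.snoc_last, Fin.snoc_castSucc]
          exact h4.symm
        · intro j
          rw [Fin.succ_castSucc, Fin.snoc_castSucc, Fin.snoc_castSucc]
          exact h3 j
    · intro q hq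
      simp only [mem_filter, mem_univ, true_and] at hq ⊢
      obtain ⟨h1, h2, h3⟩ := hq
      refine ⟨?_, ?_, ?_, ?_⟩
      · show src (q (Fin.castSucc 0)) = x
        rw [show Fin.castSucc (0 : Fin (n+1)) = (0 : Fin (n+2)) by simp]; exact h1
      · intro i
        show tgt (q (Fin.castSucc (Fin.castSucc i))) = src (q (Fin.castSucc i.succ))
        rw [← Fin.succ_castSucc]
        exact h3 i.castSucc
      · show src (q (Fin.last (n+1))) = tgt (q (Fin.castSucc (Fin.last n)))
        have := h3 (Fin.last n)
        rw [Fin.succ_last] at this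
        exact this.symm
      · exact h2
    · intro pe hpe
      ext
      · simp [Fin.init_snoc]
      · simp [Fin.snoc_last]
    · intro q hq
      exact Fin.snoc_init_self q
    · intro pe hpe
      conv_rhs => rw [Fin.prod_univ_castSucc]
      simp [Fin.snoc_castSucc, Fin.snoc_last, Fin.prod_univ_castSucc]

lemma trace_pow {V E : Type*} [Fintype V] [DecidableEq V] [Fintype E] [DecidableEq E]
    (src tgt : E → V) (w : E → ℂ) (n : ℕ) :
    Matrix.trace ((Matrix.of fun x y =>
        ∑ e ∈ univ.filter fun e => src e = x ∧ tgt e = y, w e) ^ (n + 1))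
      = ∑ c ∈ univ.filter (fun c : Fin (n + 1) → E =>
            ∀ s, tgt (c s) = src (c (finRotate (n + 1) s))),
          ∏ i, w (c i) := by
  rw [Matrix.trace]
  simp only [Matrix.diag_apply, pow_entry src tgt w n]
  have step : ∀ x : V,
      (univ.filter (fun p : Fin (n + 1) → E =>
        src (p 0) = x ∧ tgt (p (Fin.last n)) = x ∧
        ∀ i : Fin n, tgt (p i.castSucc) = src (p i.succ)))
      = (univ.filter (fun p : Fin (n + 1) → E =>
          tgt (p (Fin.last n)) = src (p 0) ∧
          ∀ i : Fin n, tgt (p i.castSucc) = src (p i.succ))).filter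
        (fun p => src (p 0) = x) := by
    intro x
    rw [Finset.filter_filter]
    apply Finset.filter_congr
    intro p _
    constructor
    · rintro ⟨h1, h2, h3⟩; exact ⟨⟨by rw [h2, h1], h3⟩, h1⟩
    · rintro ⟨⟨h2, h3⟩, h1⟩; exact ⟨h1, by rw [h2, h1], h3⟩
  simp only [step]
  rw [Finset.sum_fiberwise_of_maps_to (fun p _ => Finset.mem_univ _)]
  apply Finset.sum_congr _ (fun _ _ => rfl)
  apply Finset.filter_congr
  intro c _
  simp only [finRotate_succ_apply]
  constructor
  · rintro ⟨h2, h3⟩ s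
    refine Fin.lastCases ?_ ?_ s
    · rw [Fin.last_add_one]; exact h2
    · intro j; rw [Fin.coeSucc_eq_succ]; exact h3 j
  · intro h
    refine ⟨?_, fun j => ?_⟩
    · have := h (Fin.last n); rwa [Fin.last_add_one] at this
    · have := h j.castSucc; rwa [Fin.coeSucc_eq_succ] at this

lemma neg_one_zpow_inv (m : ℤ) : ((-1 : ℂ)) ^ (-m) = (-1 : ℂ) ^ m := by
  rw [zpow_neg, ← inv_zpow, show ((-1:ℂ))⁻¹ = -1 by norm_num]

lemma integral_exp_single (m : ℤ) :
    ∫ t in Set.Icc (-Real.pi) Real.pi, Complex.exp (-Complex.I * m * t)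
      = if m = 0 then (2 * Real.pi : ℂ) else 0 := by
  rw [MeasureTheory.integral_Icc_eq_integral_Ioc,
    ← intervalIntegral.integral_of_le (by linarith [Real.pi_pos] : -Real.pi ≤ Real.pi)]
  by_cases hm : m = 0
  · simp [hm, two_mul]
  · rw [if_neg hm]
    have hc : (-Complex.I * m : ℂ) ≠ 0 := by
      simp [Complex.I_ne_zero, Complex.ext_iff]
      exact_mod_cast hm
    have : ∀ t : ℝ, Complex.exp (-Complex.I * m * t) = Complex.exp ((-Complex.I * m) * t) := by
      intro t; ring_nf
    rw [integral_exp_mul_complex hc]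
    have h1 : Complex.exp (-Complex.I * m * Real.pi) = (-1 : ℂ) ^ (-m) := by
      rw [show (-Complex.I * m * Real.pi : ℂ) = (-m : ℤ) * (Real.pi * Complex.I) by push_cast; ring,
        Complex.exp_int_mul, Complex.exp_pi_mul_I]
    have h2 : Complex.exp (-Complex.I * m * (-Real.pi : ℝ)) = (-1 : ℂ) ^ m := by
      rw [show (-Complex.I * m * ((-Real.pi : ℝ) : ℂ) : ℂ) = (m : ℤ) * (Real.pi * Complex.I) by push_cast; ring,
        Complex.exp_int_mul, Complex.exp_pi_mul_I]
    rw [h1, h2, neg_one_zpow_inv, sub_self, zero_div]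

lemma integral_pi_prod {d : ℕ} (F : Fin d → ℝ → ℂ) :
    ∫ k in Set.pi Set.univ (fun _ : Fin d => Set.Icc (-Real.pi) Real.pi), ∏ s, F s (k s)
      = ∏ s, ∫ t in Set.Icc (-Real.pi) Real.pi, F s t := by
  rw [← integral_indicator (MeasurableSet.univ_pi (fun _ => measurableSet_Icc))]
  have key : (Set.pi Set.univ (fun _ : Fin d => Set.Icc (-Real.pi) Real.pi)).indicator
      (fun k => ∏ s, F s (k s))
      = fun k => ∏ s, (Set.Icc (-Real.pi) Real.pi).indicator (F s) (k s) := by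
    funext k
    by_cases h : k ∈ Set.pi Set.univ (fun _ : Fin d => Set.Icc (-Real.pi) Real.pi)
    · rw [Set.indicator_of_mem h]
      exact Finset.prod_congr rfl fun s _ =>
        (Set.indicator_of_mem (h s (Set.mem_univ s)) _).symm
    · rw [Set.indicator_of_notMem h]
      rw [Set.mem_pi] at h
      push_neg at h
      obtain ⟨s, -, hs⟩ := h
      exact (Finset.prod_eq_zero (Finset.mem_univ s)
        (Set.indicator_of_notMem hs _)).symm
  rw [key, MeasureTheory.integral_fintype_prod_volume_eq_prod
    (f := fun s => (Set.Icc (-Real.pi) Real.pi).indicator (F s))]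
  exact Finset.prod_congr rfl fun s _ => integral_indicator measurableSet_Icc

lemma weight_prod {d n : ℕ} (a : Fin n → ℝ) (T : Fin n → Fin d → ℤ) (k : Fin d → ℝ) :
    ∏ i, Complex.exp (-Complex.I * ((a i : ℂ) + ∑ s, (T i s : ℂ) * (k s : ℂ)))
      = Complex.exp (-Complex.I * (∑ i, a i : ℝ)) *
        ∏ s, Complex.exp (-Complex.I * ((∑ i, T i s : ℤ) : ℂ) * (k s : ℂ)) := by
  rw [← Complex.exp_sum, ← Complex.exp_sum, ← Complex.exp_add]
  congr 1
  push_cast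
  simp only [mul_add, Finset.sum_add_distrib, Finset.mul_sum, Finset.sum_mul]
  rw [Finset.sum_comm]
  simp [neg_mul, mul_assoc]

lemma torus_integral_cycle {d : ℕ} (a : ℝ) (T : Fin d → ℤ) :
    ∫ k in Set.pi Set.univ (fun _ : Fin d => Set.Icc (-Real.pi) Real.pi),
        Complex.exp (-Complex.I * (a : ℂ)) *
          ∏ s, Complex.exp (-Complex.I * ((T s : ℤ) : ℂ) * (k s : ℂ))
      = if (∀ s, T s = 0) then (2 * Real.pi : ℂ) ^ d * Complex.exp (-Complex.I * a) else 0 := by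
  rw [integral_const_mul,
    integral_pi_prod (F := fun s t => Complex.exp (-Complex.I * (T s : ℂ) * (t : ℂ)))]
  simp only [integral_exp_single]
  by_cases h : ∀ s, T s = 0
  · rw [if_pos h]
    simp only [h, if_true]
    rw [Finset.prod_const, Finset.card_univ, Fintype.card_fin, mul_comm]
  · rw [if_neg h]
    push_neg at h
    obtain ⟨s, hs⟩ := h
    rw [Finset.prod_eq_zero (Finset.mem_univ s)
      (show (if T s = 0 then (2 * Real.pi : ℂ) else 0) = 0 from if_neg hs), mul_zero]

lemma rot_rev {n : ℕ} (s : Fin n) :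
    finRotate n (Fin.rev (finRotate n s)) = Fin.rev s := by
  cases n with
  | zero => exact s.elim0
  | succ m =>
    simp only [finRotate_succ_apply]
    by_cases hs : s = Fin.last m
    · subst hs
      rw [Fin.last_add_one]
      apply Fin.ext
      simp [Fin.val_rev, Fin.val_add_one]
    · have hlt : (s : ℕ) < m := by
        rcases Fin.lt_last_iff_ne_last.mpr hs with h
        exact h
      apply Fin.ext
      have h1 : ((s + 1 : Fin (m+1)) : ℕ) = (s : ℕ) + 1 := by
        rw [Fin.val_add_one, if_neg hs]
      have h2 : ((s + 1 : Fin (m+1)).rev : ℕ) = m - (s : ℕ) - 1 := by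
        rw [Fin.val_rev, h1]; omega
      have h3 : (s + 1 : Fin (m+1)).rev ≠ Fin.last m := by
        intro hc
        have := congrArg Fin.val hc
        rw [h2] at this
        simp [Fin.val_last] at this
        omega
      rw [Fin.val_add_one, if_neg h3, h2, Fin.val_rev]
      omega

lemma sum_exp_eq_sum_cos {n d : ℕ} {V E : Type*} [Fintype V] [DecidableEq V]
    [Fintype E] [DecidableEq E]
    (src tgt : E → V) (inv : E → E) (τ : E → Fin d → ℤ) (α : E → ℝ)
    (hinv : Function.Involutive inv)
    (hsrc : ∀ e, src (inv e) = tgt e) (htgt : ∀ e, tgt (inv e) = src e)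
    (hτ : ∀ e, τ (inv e) = - τ e) (hα : ∀ e, α (inv e) = - α e) :
    ∑ c ∈ univ.filter (fun c : Fin n → E =>
        (∀ s, tgt (c s) = src (c (finRotate n s))) ∧ (∀ s : Fin d, ∑ i, τ (c i) s = 0)),
      Complex.exp (-Complex.I * ((∑ i, α (c i) : ℝ) : ℂ))
    = ((∑ c ∈ univ.filter (fun c : Fin n → E =>
        (∀ s, tgt (c s) = src (c (finRotate n s))) ∧ (∀ s : Fin d, ∑ i, τ (c i) s = 0)),
      Real.cos (∑ i, α (c i)) : ℝ) : ℂ) := by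
  set P : (Fin n → E) → Prop := fun c =>
    (∀ s, tgt (c s) = src (c (finRotate n s))) ∧ (∀ s : Fin d, ∑ i, τ (c i) s = 0) with hP
  set ρ : (Fin n → E) → (Fin n → E) := fun c i => inv (c i.rev) with hρ
  have hρρ : ∀ c, ρ (ρ c) = c := by
    intro c; funext i; simp only [hρ, hinv (c i.rev.rev), Fin.rev_rev]
  have hsum_rev : ∀ g : Fin n → ℝ, ∑ i, g (Fin.rev i) = ∑ i, g i :=
    fun g => Equiv.sum_comp Fin.revPerm g
  have hsum_revZ : ∀ g : Fin n → ℤ, ∑ i, g (Fin.rev i) = ∑ i, g i :=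
    fun g => Equiv.sum_comp Fin.revPerm g
  have hαρ : ∀ c, (∑ i, α (ρ c i)) = -∑ i, α (c i) := by
    intro c
    simp only [hρ, hα]
    rw [Finset.sum_neg_distrib, hsum_rev (fun i => α (c i))]
  have hmem : ∀ c, P c → P (ρ c) := by
    intro c ⟨h1, h2⟩
    constructor
    · intro s
      simp only [hρ, htgt, hsrc]
      rw [← rot_rev s] -- goal: src (c s.rev) = tgt (c (finRotate n s).rev)
      exact (h1 ((finRotate n s).rev)).symm
    · intro s
      simp only [hρ, hτ]
      simp only [Pi.neg_apply]
      rw [Finset.sum_neg_distrib, hsum_revZ (fun i => τ (c i) s), h2 s, neg_zero]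
  have reindex : ∑ c ∈ univ.filter P, Complex.exp (-Complex.I * ((∑ i, α (c i) : ℝ) : ℂ))
      = ∑ c ∈ univ.filter P, Complex.exp (Complex.I * ((∑ i, α (c i) : ℝ) : ℂ)) := by
    refine Finset.sum_nbij' (fun c => ρ c) (fun c => ρ c) ?_ ?_ ?_ ?_ ?_
    · intro c hc
      simp only [mem_filter, mem_univ, true_and] at hc ⊢
      exact hmem c hc
    · intro c hc
      simp only [mem_filter, mem_univ, true_and] at hc ⊢
      exact hmem c hc
    · intro c _; exact hρρ c
    · intro c _; exact hρρ c
    · intro c hc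
      rw [hαρ]
      push_cast
      ring_nf
  have two_mul_eq : (2 : ℂ) * ∑ c ∈ univ.filter P,
      Complex.exp (-Complex.I * ((∑ i, α (c i) : ℝ) : ℂ))
      = ∑ c ∈ univ.filter P, ((2 : ℂ) * Complex.cos ((∑ i, α (c i) : ℝ) : ℂ)) := by
    rw [two_mul]
    nth_rewrite 2 [reindex]
    rw [← Finset.sum_add_distrib]
    refine Finset.sum_congr rfl fun c _ => ?_
    rw [Complex.cos]
    set z : ℂ := ((∑ i, α (c i) : ℝ) : ℂ)
    rw [show Complex.exp (z * Complex.I) = Complex.exp (Complex.I * z) by rw [mul_comm],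
      show Complex.exp (-z * Complex.I) = Complex.exp (-Complex.I * z) by ring_nf]
    ring
  rw [← Finset.mul_sum] at two_mul_eq
  have h3 : ∑ c ∈ univ.filter P, Complex.exp (-Complex.I * ((∑ i, α (c i) : ℝ) : ℂ))
      = ∑ c ∈ univ.filter P, Complex.cos ((∑ i, α (c i) : ℝ) : ℂ) :=
    mul_left_cancel₀ (two_ne_zero : (2:ℂ) ≠ 0) two_mul_eq
  rw [h3]
  simp only [← Complex.ofReal_cos]
  norm_cast

theorem integral_trace_pow_magnetic_adjacency {d : ℕ} {V E : Type*}
    [Fintype V] [DecidableEq V] [Fintype E] [DecidableEq E]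
    (src tgt : E → V) (inv : E → E) (τ : E → Fin d → ℤ) (α : E → ℝ)
    (hinv : Function.Involutive inv)
    (hsrc : ∀ e, src (inv e) = tgt e) (htgt : ∀ e, tgt (inv e) = src e)
    (hτ : ∀ e, τ (inv e) = - τ e) (hα : ∀ e, α (inv e) = - α e)
    (A : (Fin d → ℝ) → Matrix V V ℂ)
    (hA : ∀ k x y, A k x y =
      ∑ e ∈ univ.filter (fun e => src e = x ∧ tgt e = y),
        Complex.exp (-Complex.I * ((α e : ℂ) + ∑ s, (τ e s : ℂ) * (k s : ℂ))))
    (n : ℕ) (hn : 0 < n) :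
    (1 / (2 * Real.pi) ^ d : ℂ) *
      ∫ k in Set.pi Set.univ (fun _ : Fin d => Set.Icc (-Real.pi) Real.pi),
        Matrix.trace ((A k) ^ n) =
      ((∑ c ∈ univ.filter (fun c : Fin n → E =>
            (∀ s, tgt (c s) = src (c (finRotate n s))) ∧
            (∀ s : Fin d, ∑ i, τ (c i) s = 0)),
          Real.cos (∑ s, α (c s)) : ℝ) : ℂ) := by
  obtain ⟨m, rfl⟩ : ∃ m, n = m + 1 := ⟨n - 1, (Nat.succ_pred_eq_of_pos hn).symm⟩
  have hAeq : ∀ k : Fin d → ℝ, A k = Matrix.of fun x y =>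
      ∑ e ∈ univ.filter fun e => src e = x ∧ tgt e = y,
        Complex.exp (-Complex.I * ((α e : ℂ) + ∑ s, (τ e s : ℂ) * (k s : ℂ))) := by
    intro k; ext x y; rw [hA]; rfl
  have htrace : ∀ k : Fin d → ℝ, Matrix.trace ((A k) ^ (m + 1))
      = ∑ c ∈ univ.filter (fun c : Fin (m + 1) → E =>
          ∀ s, tgt (c s) = src (c (finRotate (m + 1) s))),
        Complex.exp (-Complex.I * ((∑ i, α (c i) : ℝ) : ℂ)) *
          ∏ s, Complex.exp (-Complex.I * (((∑ i, τ (c i) s : ℤ)) : ℂ) * (k s : ℂ)) := by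
    intro k
    rw [hAeq k, trace_pow]
    refine Finset.sum_congr rfl fun c _ => ?_
    exact weight_prod (fun i => α (c i)) (fun i => τ (c i)) k
  simp only [htrace]
  rw [MeasureTheory.integral_finset_sum]
  · simp only [torus_integral_cycle]
    rw [← Finset.sum_filter, Finset.filter_filter, ← Finset.mul_sum, ← mul_assoc]
    have hne : ((2 : ℂ) * (Real.pi : ℂ)) ^ d ≠ 0 := by
      apply pow_ne_zero
      exact mul_ne_zero two_ne_zero (Complex.ofReal_ne_zero.mpr Real.pi_ne_zero)
    rw [show (1 / (2 * Real.pi) ^ d : ℂ) * (2 * Real.pi : ℂ) ^ d = 1 from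
      one_div_mul_cancel hne]
    rw [one_mul]
    exact sum_exp_eq_sum_cos src tgt inv τ α hinv hsrc htgt hτ hα
  · intro c _
    have hcont : Continuous fun k : Fin d → ℝ =>
        Complex.exp (-Complex.I * ((∑ i, α (c i) : ℝ) : ℂ)) *
          ∏ s, Complex.exp (-Complex.I * (((∑ i, τ (c i) s : ℤ)) : ℂ) * (k s : ℂ)) := by
      apply Continuous.mul continuous_const
      apply continuous_finset_prod
      intro s _
      exact Complex.continuous_exp.comp
        (continuous_const.mul (Complex.continuous_ofReal.comp (continuous_apply s)))
    exact hcont.continuousOn.integrableOn_compact (isCompact_univ_pi fun _ => isCompact_Icc)
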